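/- Let G be a simple graph with edge ideal I. Then (I^∨)^2 has no non-minimal associated primes if and only if G is bipartite. -/

import Mathlib

open MvPolynomial Finset

noncomputable section

/-- A `k`-cover of a hypergraph with edge set `E`: a nonzero tuple whose entries
sum to at least `k` over every edge. -/
def IsCover {V : Type*} (E : Finset (Finset V)) (k : ℕ) (a : V → ℕ) : Prop :=
  a ≠ 0 ∧ ∀ e ∈ E, k ≤ ∑ i ∈ e, a i

/-- `a` is a sum of two 1-covers. -/
def SumTwoOneCovers {V : Type*} (E : Finset (Finset V)) (a : V → ℕ) : Prop :=
  ∃ b c : V → ℕ, IsCover E 1 b ∧ IsCover E 1 c ∧ a = b + c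

/-- An independent set: no edge is contained in `S`. -/
def IsIndep {V : Type*} (E : Finset (Finset V)) (S : Finset V) : Prop :=
  ∀ e ∈ E, ¬ e ⊆ S

/-- `i` is in the neighborhood of `S`: `i ∉ S` and some edge consists of `i`
together with vertices of `S`. -/
def InNbhd {V : Type*} (E : Finset (Finset V)) (S : Finset V) (i : V) : Prop :=
  i ∉ S ∧ ∃ e ∈ E, i ∈ e ∧ ∀ j ∈ e, j ≠ i → j ∈ S

open Classical in
/-- The 2-cover `A_S` attached to an independent set `S`:
`0` on `S`, `2` on `N(S)`, and `1` elsewhere. -/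
noncomputable def indepCover {V : Type*} (E : Finset (Finset V)) (S : Finset V) : V → ℕ :=
  fun i => if i ∈ S then 0 else if InNbhd E S i then 2 else 1

/-- The Alexander dual of the edge ideal: `⋂_{edges e} (x_i : i ∈ e)`. -/
noncomputable def dualIdeal {V : Type*} (K : Type*) [Field K] (E : Finset (Finset V)) :
    Ideal (MvPolynomial V K) :=
  ⨅ e ∈ E, Ideal.span (X '' (e : Set V))

/-- The monomial `x_1^{a_1} ⋯ x_n^{a_n}` attached to a tuple `a`. -/
noncomputable def coverMonomial {V : Type*} [Fintype V] (K : Type*) [Field K] (a : V → ℕ) :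
    MvPolynomial V K :=
  ∏ i, X i ^ a i

/-- Connectedness of a hypergraph: any two vertices are linked by a chain of
vertices in which consecutive vertices share an edge. -/
def HConnected {V : Type*} (E : Finset (Finset V)) : Prop :=
  ∀ x y : V, ∃ l : List V, l.head? = some x ∧ l.getLast? = some y ∧
    l.Chain' fun a b => ∃ e ∈ E, a ∈ e ∧ b ∈ e

/-- The cyclic 3-hypergraph with edges `{x_1,x_2,x_3}, {x_3,x_4,x_5}, …`
(0-based: `{2j, 2j+1, 2j+2}` modulo `n`). -/
def cyc3 (n : ℕ) (hn : 0 < n) : Finset (Finset (Fin n)) :=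
  (Finset.range ((n + 1) / 2)).image fun j =>
    ({⟨(2 * j) % n, Nat.mod_lt _ hn⟩, ⟨(2 * j + 1) % n, Nat.mod_lt _ hn⟩,
      ⟨(2 * j + 2) % n, Nat.mod_lt _ hn⟩} : Finset (Fin n))

/-- The alternating tuple: `1` on odd vertices `x_1, x_3, …` (0-based even
indices), `0` on even vertices. -/
def altCover (n : ℕ) : Fin n → ℕ :=
  fun i => if (i : ℕ) % 2 = 0 then 1 else 0


namespace Stmt8Aux

variable {K : Type*} [Field K] {n : ℕ}

/-- degree of an exponent vector along a vertex set -/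
def degS (S : Finset (Fin n)) (d : Fin n →₀ ℕ) : ℕ := ∑ i ∈ S, d i

lemma degS_add (S : Finset (Fin n)) (d e : Fin n →₀ ℕ) :
    degS S (d + e) = degS S d + degS S e := by
  simp [degS, Finset.sum_add_distrib]

lemma degS_single (S : Finset (Fin n)) (i : Fin n) :
    degS S (Finsupp.single i 1) = if i ∈ S then 1 else 0 := by
  classical
  simp [degS, Finsupp.single_apply, Finset.sum_ite_eq']

/-- the span of the variables in S -/
def PS (K : Type*) [Field K] (S : Finset (Fin n)) : Ideal (MvPolynomial (Fin n) K) :=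
  Ideal.span (X '' (S : Set (Fin n)))

/-- the ideal of polynomials all of whose monomials have S-degree ≥ k -/
def degIdeal (K : Type*) [Field K] (S : Finset (Fin n)) (k : ℕ) :
    Ideal (MvPolynomial (Fin n) K) where
  carrier := {f | ∀ d ∈ f.support, k ≤ degS S d}
  add_mem' := by
    intro f g hf hg d hd
    rcases Finset.mem_union.1 (MvPolynomial.support_add hd) with h | h
    · exact hf d h
    · exact hg d h
  zero_mem' := by intro d hd; simp at hd
  smul_mem' := by
    classical
    intro c f hf d hd
    rw [smul_eq_mul] at hd
    obtain ⟨d1, hd1, d2, hd2, rfl⟩ := Finset.mem_add.1 (MvPolynomial.support_mul c f hd)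
    rw [degS_add]
    exact le_add_of_le_right (hf d2 hd2)

lemma mul_mem_degIdeal {S : Finset (Fin n)} {a b : ℕ} {f g : MvPolynomial (Fin n) K}
    (hf : f ∈ degIdeal K S a) (hg : g ∈ degIdeal K S b) : f * g ∈ degIdeal K S (a + b) := by
  classical
  intro d hd
  obtain ⟨d1, hd1, d2, hd2, rfl⟩ := Finset.mem_add.1 (MvPolynomial.support_mul f g hd)
  rw [degS_add]
  exact add_le_add (hf d1 hd1) (hg d2 hd2)

lemma PS_le_degIdeal (S : Finset (Fin n)) : PS K S ≤ degIdeal K S 1 := by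
  refine Ideal.span_le.2 ?_
  rintro _ ⟨i, hi, rfl⟩
  intro d hd
  rw [MvPolynomial.support_X] at hd
  rw [Finset.mem_singleton] at hd
  subst hd
  rw [degS_single]
  simp_all

lemma pow_PS_le (S : Finset (Fin n)) (k : ℕ) : (PS K S) ^ k ≤ degIdeal K S k := by
  induction k with
  | zero => intro f _ d _; exact Nat.zero_le _
  | succ k ih =>
      rw [pow_succ]
      exact Ideal.mul_le.2 fun r hr s hs => mul_mem_degIdeal (ih hr) (PS_le_degIdeal S hs)


/-- converse: a monomial with S-degree ≥ k lies in PS^k -/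
lemma monomial_mem_pow_PS {S : Finset (Fin n)} {k : ℕ} {d : Fin n →₀ ℕ} (c : K)
    (hd : k ≤ degS S d) : monomial d c ∈ (PS K S) ^ k := by
  induction k generalizing d with
  | zero => simp [Ideal.one_eq_top]
  | succ k ih =>
      have hpos : 0 < degS S d := lt_of_lt_of_le (Nat.succ_pos k) hd
      have : ∃ i ∈ S, 0 < d i := by
        by_contra h
        push_neg at h
        have : degS S d = 0 := Finset.sum_eq_zero fun i hi => Nat.le_zero.1 (h i hi)
        omega
      obtain ⟨i, hiS, hdi⟩ := this
      have hle : Finsupp.single i 1 ≤ d := by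
        intro j
        classical
        rcases eq_or_ne i j with rfl | hne
        · simp; omega
        · simp [Finsupp.single_apply, hne]
      have hsplit : d = Finsupp.single i 1 + (d - Finsupp.single i 1) := by
        rw [add_tsub_cancel_of_le hle]
      have hdeg : k ≤ degS S (d - Finsupp.single i 1) := by
        have := degS_add S (Finsupp.single i 1) (d - Finsupp.single i 1)
        rw [← hsplit] at this
        rw [degS_single] at this
        simp only [hiS, if_true] at this
        omega
      have heq : monomial d c =
          X i * monomial (d - Finsupp.single i 1) c := by
        rw [X, monomial_mul, one_mul, ← hsplit]
      rw [heq, pow_succ, mul_comm ((PS K S) ^ k) (PS K S)]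
      exact Ideal.mul_mem_mul (Ideal.subset_span ⟨i, hiS, rfl⟩) (ih hdeg)

/-- main membership characterization for powers of variable-spans -/
lemma mem_pow_PS_iff {S : Finset (Fin n)} {k : ℕ} {f : MvPolynomial (Fin n) K} :
    f ∈ (PS K S) ^ k ↔ ∀ d ∈ f.support, k ≤ degS S d := by
  constructor
  · exact fun h => pow_PS_le S k h
  · intro h
    rw [f.as_sum]
    exact Ideal.sum_mem _ fun d hd => monomial_mem_pow_PS _ (h d hd)

lemma monomial_mem_pow_PS_iff {S : Finset (Fin n)} {k : ℕ} {d : Fin n →₀ ℕ} {c : K}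
    (hc : c ≠ 0) : monomial d c ∈ (PS K S) ^ k ↔ k ≤ degS S d := by
  classical
  rw [mem_pow_PS_iff, MvPolynomial.support_monomial, if_neg hc]
  simp

lemma mem_PS_iff {S : Finset (Fin n)} {f : MvPolynomial (Fin n) K} :
    f ∈ PS K S ↔ ∀ d ∈ f.support, 1 ≤ degS S d := by
  conv_lhs => rw [show PS K S = (PS K S) ^ 1 by rw [pow_one]]
  exact mem_pow_PS_iff

lemma X_mem_PS_iff {S : Finset (Fin n)} {i : Fin n} :
    (X i : MvPolynomial (Fin n) K) ∈ PS K S ↔ i ∈ S := by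
  rw [mem_PS_iff]
  simp only [MvPolynomial.support_X, Finset.mem_singleton, forall_eq, degS_single]
  split <;> simp_all

/-- the minimal-S-degree part of f -/
def minPart (S : Finset (Fin n)) (δ : ℕ) (f : MvPolynomial (Fin n) K) :
    MvPolynomial (Fin n) K :=
  ∑ d ∈ f.support.filter (fun d => degS S d = δ), monomial d (coeff d f)

lemma coeff_minPart (S : Finset (Fin n)) (δ : ℕ) (f : MvPolynomial (Fin n) K)
    (d : Fin n →₀ ℕ) :
    coeff d (minPart S δ f) = if degS S d = δ then coeff d f else 0 := by
  classical
  rw [minPart, coeff_sum]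
  simp only [coeff_monomial]
  rw [Finset.sum_ite_eq']
  by_cases h : degS S d = δ
  · rw [if_pos h]
    by_cases hs : d ∈ f.support
    · rw [if_pos (Finset.mem_filter.2 ⟨hs, h⟩)]
    · rw [if_neg (fun hmem => hs (Finset.mem_filter.1 hmem).1),
        MvPolynomial.notMem_support_iff.1 hs]
  · rw [if_neg h, if_neg (show d ∉ filter (fun d => degS S d = δ) f.support from
      fun hmem => h (Finset.mem_filter.1 hmem).2)]

lemma support_minPart (S : Finset (Fin n)) (δ : ℕ) (f : MvPolynomial (Fin n) K) :
    (minPart S δ f).support = f.support.filter (fun d => degS S d = δ) := by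
  classical
  ext d
  rw [MvPolynomial.mem_support_iff, coeff_minPart, Finset.mem_filter,
    MvPolynomial.mem_support_iff]
  split
  · next h => simp [h]
  · next h => simp [h]

/-- key: if δf, δg are the min S-degrees of monomials of f, g, then f*g has a
monomial of S-degree δf + δg. -/
lemma exists_min_deg_mul {S : Finset (Fin n)} {f g : MvPolynomial (Fin n) K}
    {δf δg : ℕ}
    (hfmin : ∀ d ∈ f.support, δf ≤ degS S d) (hfex : ∃ d ∈ f.support, degS S d = δf)
    (hgmin : ∀ d ∈ g.support, δg ≤ degS S d) (hgex : ∃ d ∈ g.support, degS S d = δg) :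
    ∃ d ∈ (f * g).support, degS S d = δf + δg := by
  classical
  have hFne : minPart S δf f ≠ 0 := by
    obtain ⟨d, hd, hdeg⟩ := hfex
    intro h0
    have h1 := coeff_minPart S δf f d
    rw [h0, coeff_zero, if_pos hdeg] at h1
    exact MvPolynomial.mem_support_iff.1 hd h1.symm
  have hGne : minPart S δg g ≠ 0 := by
    obtain ⟨d, hd, hdeg⟩ := hgex
    intro h0
    have h1 := coeff_minPart S δg g d
    rw [h0, coeff_zero, if_pos hdeg] at h1
    exact MvPolynomial.mem_support_iff.1 hd h1.symm
  have hFG : minPart S δf f * minPart S δg g ≠ 0 := mul_ne_zero hFne hGne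
  obtain ⟨d, hd⟩ := MvPolynomial.ne_zero_iff.1 hFG
  have hdd : d ∈ (minPart S δf f * minPart S δg g).support := MvPolynomial.mem_support_iff.2 hd
  obtain ⟨d1, hd1, d2, hd2, rfl⟩ := Finset.mem_add.1 (MvPolynomial.support_mul _ _ hdd)
  rw [support_minPart, Finset.mem_filter] at hd1 hd2
  have hdeg : degS S (d1 + d2) = δf + δg := by rw [degS_add, hd1.2, hd2.2]
  refine ⟨d1 + d2, ?_, hdeg⟩
  rw [MvPolynomial.mem_support_iff]
  have hf0 : ∀ d', degS S d' < δf → coeff d' f = 0 := by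
    intro d' hlt
    by_contra h0
    exact absurd (hfmin d' (MvPolynomial.mem_support_iff.2 h0)) (by omega)
  have hg0 : ∀ d', degS S d' < δg → coeff d' g = 0 := by
    intro d' hlt
    by_contra h0
    exact absurd (hgmin d' (MvPolynomial.mem_support_iff.2 h0)) (by omega)
  have hcoeff : coeff (d1 + d2) (f * g) =
      coeff (d1 + d2) (minPart S δf f * minPart S δg g) := by
    rw [coeff_mul, coeff_mul]
    refine Finset.sum_congr rfl fun p hp => ?_
    rw [HasAntidiagonal.mem_antidiagonal] at hp
    have hsum : degS S p.1 + degS S p.2 = δf + δg := by rw [← degS_add, hp, hdeg]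
    rw [coeff_minPart, coeff_minPart]
    rcases lt_trichotomy (degS S p.1) δf with hlt | heq | hgt
    · rw [if_neg (by omega), hf0 _ hlt, zero_mul, zero_mul]
    · rw [if_pos heq, if_pos (by omega)]
    · rw [hg0 _ (by omega), if_neg (by omega)]
      simp
  rw [hcoeff]
  exact hd


lemma minDeg_exists {S : Finset (Fin n)} {f : MvPolynomial (Fin n) K} (hf : f ≠ 0) :
    ∃ δ, (∀ d ∈ f.support, δ ≤ degS S d) ∧ (∃ d ∈ f.support, degS S d = δ) := by
  classical
  have hne : (f.support.image (degS S)).Nonempty := by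
    rw [Finset.image_nonempty]
    exact MvPolynomial.support_nonempty.2 hf
  refine ⟨(f.support.image (degS S)).min' hne, ?_, ?_⟩
  · intro d hd
    exact Finset.min'_le _ _ (Finset.mem_image_of_mem _ hd)
  · obtain ⟨d, hd, hdeg⟩ := Finset.mem_image.1 (Finset.min'_mem _ hne)
    exact ⟨d, hd, hdeg⟩

lemma PS_ne_top (S : Finset (Fin n)) : PS K S ≠ ⊤ := by
  classical
  intro h
  have h1 : (1 : MvPolynomial (Fin n) K) ∈ PS K S := h ▸ Submodule.mem_top
  rw [mem_PS_iff] at h1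
  have := h1 0 (by
    rw [show (1 : MvPolynomial (Fin n) K) = monomial 0 1 by simp [MvPolynomial.monomial_zero'],
      MvPolynomial.support_monomial]
    simp)
  simp [degS] at this

lemma PS_isPrime (S : Finset (Fin n)) : (PS K S).IsPrime := by
  constructor
  · exact PS_ne_top S
  · intro f g hfg
    by_contra h
    push_neg at h
    obtain ⟨hf, hg⟩ := h
    rw [mem_PS_iff] at hf hg hfg
    push_neg at hf hg
    obtain ⟨df, hdf, hdf0⟩ := hf
    obtain ⟨dg, hdg, hdg0⟩ := hg
    obtain ⟨d, hd, hdeg⟩ := exists_min_deg_mul (S := S) (f := f) (g := g) (δf := 0)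
      (fun _ _ => Nat.zero_le _) ⟨df, hdf, by omega⟩ (fun _ _ => Nat.zero_le _)
      ⟨dg, hdg, by omega⟩
    have := hfg d hd
    omega

/-- primary property of PS^k -/
lemma PS_pow_primary {S : Finset (Fin n)} {k : ℕ} {f g : MvPolynomial (Fin n) K}
    (hfg : g * f ∈ (PS K S) ^ k) (hf : f ∉ (PS K S) ^ k) : g ∈ PS K S := by
  by_contra hg
  have hfne : f ≠ 0 := by rintro rfl; exact hf (Ideal.zero_mem _)
  have hgne : g ≠ 0 := by rintro rfl; exact hg (Ideal.zero_mem _)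
  rw [mem_PS_iff] at hg
  push_neg at hg
  obtain ⟨dg, hdg, hdg0⟩ := hg
  obtain ⟨δ, hmin, hex⟩ := minDeg_exists (S := S) hfne
  have hδ : δ < k := by
    rw [mem_pow_PS_iff] at hf
    push_neg at hf
    obtain ⟨d, hd, hdk⟩ := hf
    have := hmin d hd
    omega
  obtain ⟨d, hd, hdeg⟩ := exists_min_deg_mul (S := S) (f := g) (g := f) (δf := 0) (δg := δ)
    (fun _ _ => Nat.zero_le _) ⟨dg, hdg, by omega⟩ hmin hex
  rw [mem_pow_PS_iff] at hfg
  have := hfg d hd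
  omega

section MonClosed

/-- an ideal is monomial-closed if it contains each monomial of each element -/
def MonClosed (I : Ideal (MvPolynomial (Fin n) K)) : Prop :=
  ∀ f ∈ I, ∀ d, monomial d (coeff d f) ∈ I

lemma monClosed_span {T : Set (MvPolynomial (Fin n) K)}
    (hT : ∀ t ∈ T, ∃ d, ∃ c : K, t = monomial d c) : MonClosed (Ideal.span T) := by
  classical
  intro f hf
  let J : Ideal (MvPolynomial (Fin n) K) :=
    { carrier := {f | ∀ d, monomial d (coeff d f) ∈ Ideal.span T}
      add_mem' := by
        intro a b ha hb d
        rw [coeff_add, map_add]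
        exact Ideal.add_mem _ (ha d) (hb d)
      zero_mem' := by intro d; simp
      smul_mem' := by
        intro c a ha d
        rw [smul_eq_mul, coeff_mul, map_sum]
        refine Ideal.sum_mem _ fun p hp => ?_
        rw [HasAntidiagonal.mem_antidiagonal] at hp
        rw [← hp, ← monomial_mul]
        exact Ideal.mul_mem_left _ _ (ha p.2) }
  have hfJ : f ∈ J := by
    have : Ideal.span T ≤ J := by
      rw [Ideal.span_le]
      rintro t ht d
      obtain ⟨u, c, rfl⟩ := hT t ht
      rw [coeff_monomial]
      split
      · next h => exact h ▸ Ideal.subset_span ht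
      · rw [map_zero]; exact Ideal.zero_mem _
    exact this hf
  exact hfJ

lemma monClosed_inf {I J : Ideal (MvPolynomial (Fin n) K)} (hI : MonClosed I)
    (hJ : MonClosed J) : MonClosed (I ⊓ J) :=
  fun f hf d => ⟨hI f hf.1 d, hJ f hf.2 d⟩

/-- the set of monic monomials of an ideal -/
def monSet (I : Ideal (MvPolynomial (Fin n) K)) : Set (MvPolynomial (Fin n) K) :=
  {m | (∃ d, m = monomial d (1 : K)) ∧ m ∈ I}

lemma span_monSet {I : Ideal (MvPolynomial (Fin n) K)} (hI : MonClosed I) :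
    Ideal.span (monSet I) = I := by
  apply le_antisymm
  · rw [Ideal.span_le]
    exact fun m hm => hm.2
  · intro f hf
    rw [f.as_sum]
    refine Ideal.sum_mem _ fun d hd => ?_
    have hc : coeff d f ≠ 0 := MvPolynomial.mem_support_iff.1 hd
    have hmono : monomial d (1 : K) ∈ I := by
      have := hI f hf d
      have h2 : monomial d (1 : K) = MvPolynomial.C (coeff d f)⁻¹ * monomial d (coeff d f) := by
        rw [show MvPolynomial.C ((coeff d f)⁻¹ : K) = monomial 0 ((coeff d f)⁻¹ : K) from
          rfl, monomial_mul, zero_add, inv_mul_cancel₀ hc]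
      rw [h2]
      exact Ideal.mul_mem_left _ _ this
    have heq : monomial d (coeff d f) = MvPolynomial.C (coeff d f) * monomial d 1 := by
      rw [show MvPolynomial.C (coeff d f) = monomial 0 (coeff d f) from rfl, monomial_mul,
        zero_add, mul_one]
    rw [heq]
    exact Ideal.mul_mem_left _ _ (Ideal.subset_span ⟨⟨d, rfl⟩, hmono⟩)

open Pointwise in
lemma monClosed_sq {I : Ideal (MvPolynomial (Fin n) K)} (hI : MonClosed I) :
    MonClosed (I ^ 2) := by
  have h2 : I ^ 2 = Ideal.span (monSet I * monSet I) := by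
    rw [← Ideal.span_mul_span', span_monSet hI, sq]
  rw [h2]
  apply monClosed_span
  rintro t ⟨a, ha, b, hb, rfl⟩
  obtain ⟨da, rfl⟩ := ha.1
  obtain ⟨db, rfl⟩ := hb.1
  refine ⟨da + db, 1, ?_⟩
  show monomial da (1 : K) * monomial db 1 = _
  rw [monomial_mul, one_mul]

/-- a monomial in the span of a set of monic monomials is divisible by one of them -/
lemma monomial_mem_span_monomials {T : Set (MvPolynomial (Fin n) K)}
    (hT : ∀ t ∈ T, ∃ d, t = monomial d (1 : K)) {d : Fin n →₀ ℕ} {c : K} (hc : c ≠ 0)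
    (hmem : monomial d c ∈ Ideal.span T) :
    ∃ u, monomial u (1 : K) ∈ T ∧ u ≤ d := by
  classical
  obtain ⟨w, hw, hsum⟩ := Submodule.mem_span_set.1 hmem
  have hcoeff : coeff d (monomial d c) ≠ 0 := by rwa [coeff_monomial, if_pos rfl]
  rw [← hsum] at hcoeff
  rw [Finsupp.sum] at hcoeff
  have : ∃ m ∈ w.support, coeff d (w m • m) ≠ 0 := by
    by_contra h
    push_neg at h
    rw [MvPolynomial.coeff_sum] at hcoeff
    exact hcoeff (Finset.sum_eq_zero h)
  obtain ⟨m, hm, hne⟩ := this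
  have hmT : m ∈ T := hw hm
  obtain ⟨u, rfl⟩ := hT m hmT
  refine ⟨u, hmT, ?_⟩
  rw [smul_eq_mul, MvPolynomial.coeff_mul_monomial'] at hne
  by_contra hle
  rw [if_neg hle] at hne
  exact hne rfl

end MonClosed


section Dual

variable {E : Finset (Finset (Fin n))}

lemma mem_dualIdeal_iff {f : MvPolynomial (Fin n) K} :
    f ∈ dualIdeal K E ↔ ∀ e ∈ E, f ∈ PS K e := by
  simp [dualIdeal, PS, Submodule.mem_iInf]

lemma monClosed_dualIdeal : MonClosed (dualIdeal K E) := by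
  intro f hf d
  rw [mem_dualIdeal_iff] at hf ⊢
  intro e he
  exact monClosed_span (T := X '' (e : Set (Fin n)))
    (by rintro t ⟨i, _, rfl⟩; exact ⟨Finsupp.single i 1, 1, rfl⟩) f (hf e he) d

lemma monClosed_dualIdeal_sq : MonClosed ((dualIdeal K E) ^ 2) :=
  monClosed_sq monClosed_dualIdeal

lemma monomial_mem_dualIdeal_iff {d : Fin n →₀ ℕ} {c : K} (hc : c ≠ 0) :
    monomial d c ∈ dualIdeal K E ↔ ∀ e ∈ E, 1 ≤ degS e d := by
  rw [mem_dualIdeal_iff]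
  refine forall₂_congr fun e he => ?_
  rw [show PS K e = (PS K e) ^ 1 by rw [pow_one]]
  exact monomial_mem_pow_PS_iff hc

lemma monic_of_monomial_mem {I : Ideal (MvPolynomial (Fin n) K)} {d : Fin n →₀ ℕ} {c : K}
    (hc : c ≠ 0) (h : monomial d c ∈ I) : monomial d (1 : K) ∈ I := by
  have h2 : monomial d (1 : K) = MvPolynomial.C c⁻¹ * monomial d c := by
    rw [show MvPolynomial.C (c⁻¹ : K) = monomial 0 (c⁻¹ : K) from rfl, monomial_mul,
      zero_add, inv_mul_cancel₀ hc]
  rw [h2]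
  exact Ideal.mul_mem_left _ _ h

open Pointwise in
lemma monomial_mem_dualIdeal_sq_iff {d : Fin n →₀ ℕ} {c : K} (hc : c ≠ 0) :
    monomial d c ∈ (dualIdeal K E) ^ 2 ↔
      ∃ b b' : Fin n →₀ ℕ, (∀ e ∈ E, 1 ≤ degS e b) ∧ (∀ e ∈ E, 1 ≤ degS e b') ∧
        d = b + b' := by
  constructor
  · intro h
    have hmono : monomial d (1 : K) ∈ (dualIdeal K E) ^ 2 := monic_of_monomial_mem hc h
    have h2 : (dualIdeal K E) ^ 2 =
        Ideal.span (monSet (dualIdeal K E) * monSet (dualIdeal K E)) := by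
      rw [← Ideal.span_mul_span', span_monSet monClosed_dualIdeal, sq]
    rw [h2] at hmono
    have hTmon : ∀ t ∈ monSet (dualIdeal K E) * monSet (dualIdeal K E),
        ∃ u, t = monomial u (1 : K) := by
      rintro t ⟨m1, hm1, m2, hm2, rfl⟩
      obtain ⟨u1, rfl⟩ := hm1.1
      obtain ⟨u2, rfl⟩ := hm2.1
      refine ⟨u1 + u2, ?_⟩
      show monomial u1 (1 : K) * monomial u2 1 = _
      rw [monomial_mul, one_mul]
    obtain ⟨u, huT, hud⟩ := monomial_mem_span_monomials hTmon one_ne_zero hmono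
    obtain ⟨m1, hm1, m2, hm2, heq⟩ := huT
    obtain ⟨u1, rfl⟩ := hm1.1
    obtain ⟨u2, rfl⟩ := hm2.1
    have heq2 : monomial (u1 + u2) (1 : K) = monomial u 1 := by
      rw [← heq]
      symm
      show monomial u1 (1 : K) * monomial u2 1 = _
      rw [monomial_mul, one_mul]
    have huu : u1 + u2 = u := by
      rcases (monomial_eq_monomial_iff _ _ _ _).1 heq2 with h | h
      · exact h.1
      · exact absurd h.1 one_ne_zero
    have hcov1 : ∀ e ∈ E, 1 ≤ degS e u1 :=
      (monomial_mem_dualIdeal_iff one_ne_zero).1 hm1.2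
    have hcov2 : ∀ e ∈ E, 1 ≤ degS e u2 :=
      (monomial_mem_dualIdeal_iff one_ne_zero).1 hm2.2
    refine ⟨u1, u2 + (d - u), hcov1, fun e he => ?_, ?_⟩
    · rw [degS_add]
      exact le_add_of_le_left (hcov2 e he)
    · rw [← add_assoc, huu, add_tsub_cancel_of_le hud]
  · rintro ⟨b, b', hb, hb', rfl⟩
    have heq : monomial (b + b') c = monomial b c * monomial b' 1 := by
      rw [monomial_mul, mul_one]
    rw [heq, sq]
    exact Ideal.mul_mem_mul ((monomial_mem_dualIdeal_iff hc).2 hb)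
      ((monomial_mem_dualIdeal_iff one_ne_zero).2 hb')

end Dual

section Bipartite

variable {E : Finset (Finset (Fin n))}

/-- numeric splitting of a 2-cover into two 1-covers over a bipartition -/
lemma split_two_cover {A B : Finset (Fin n)} (hAB : Disjoint A B) (hU : A ∪ B = Finset.univ)
    (hE : ∀ e ∈ E, (e ∩ A).Nonempty ∧ (e ∩ B).Nonempty) (hm : ∀ e ∈ E, e.card = 2)
    {d : Fin n →₀ ℕ} (hd : ∀ e ∈ E, 2 ≤ degS e d) :
    ∃ b b' : Fin n →₀ ℕ, (∀ e ∈ E, 1 ≤ degS e b) ∧ (∀ e ∈ E, 1 ≤ degS e b') ∧ d = b + b' := by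
  classical
  set b : Fin n →₀ ℕ := Finsupp.equivFunOnFinite.symm
    (fun i => if i ∈ A then min (d i) 1 else d i - min (d i) 1) with hb
  set b' : Fin n →₀ ℕ := Finsupp.equivFunOnFinite.symm
    (fun i => if i ∈ A then d i - min (d i) 1 else min (d i) 1) with hb'
  have hbv : ∀ i, b i = if i ∈ A then min (d i) 1 else d i - min (d i) 1 := fun i => rfl
  have hbv' : ∀ i, b' i = if i ∈ A then d i - min (d i) 1 else min (d i) 1 := fun i => rfl
  have hsum : d = b + b' := by
    ext i
    rw [Finsupp.add_apply, hbv, hbv']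
    split <;> omega
  have hedge : ∀ e ∈ E, ∃ i j, i ≠ j ∧ e = {i, j} ∧ i ∈ A ∧ j ∈ B := by
    intro e he
    obtain ⟨i, hi⟩ := (hE e he).1
    obtain ⟨j, hj⟩ := (hE e he).2
    rw [Finset.mem_inter] at hi hj
    have hij : i ≠ j := fun h => Finset.disjoint_left.1 hAB hi.2 (h ▸ hj.2)
    refine ⟨i, j, hij, ?_, hi.2, hj.2⟩
    have hsub : ({i, j} : Finset (Fin n)) ⊆ e := by
      intro x hx
      rcases Finset.mem_insert.1 hx with rfl | hx
      · exact hi.1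
      · exact (Finset.mem_singleton.1 hx) ▸ hj.1
    refine (Finset.eq_of_subset_of_card_le hsub ?_).symm
    rw [hm e he, Finset.card_insert_of_notMem (by simp [hij]), Finset.card_singleton]
  refine ⟨b, b', ?_, ?_, hsum⟩
  · intro e he
    obtain ⟨i, j, hij, rfl, hiA, hjB⟩ := hedge e he
    have h2 := hd _ he
    rw [degS, Finset.sum_pair hij] at h2 ⊢
    have hjA : j ∉ A := fun h => Finset.disjoint_left.1 hAB h hjB
    rw [hbv, hbv, if_pos hiA, if_neg hjA]
    omega
  · intro e he
    obtain ⟨i, j, hij, rfl, hiA, hjB⟩ := hedge e he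
    have h2 := hd _ he
    rw [degS, Finset.sum_pair hij] at h2 ⊢
    have hjA : j ∉ A := fun h => Finset.disjoint_left.1 hAB h hjB
    rw [hbv', hbv', if_pos hiA, if_neg hjA]
    omega

lemma dualIdeal_sq_eq {A B : Finset (Fin n)} (hAB : Disjoint A B) (hU : A ∪ B = Finset.univ)
    (hEc : ∀ e ∈ E, (e ∩ A).Nonempty ∧ (e ∩ B).Nonempty) (hm : ∀ e ∈ E, e.card = 2) :
    (dualIdeal K E) ^ 2 = ⨅ e ∈ E, (PS K e) ^ 2 := by
  apply le_antisymm
  · rw [le_iInf₂_iff]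
    intro e he
    have h1 : dualIdeal K E ≤ PS K e := fun f hf => mem_dualIdeal_iff.1 hf e he
    calc (dualIdeal K E) ^ 2 ≤ (PS K e) * (dualIdeal K E) := by
          rw [sq]; exact Ideal.mul_mono_left h1
      _ ≤ (PS K e) ^ 2 := by rw [sq]; exact Ideal.mul_mono_right h1
  · intro f hf
    rw [Submodule.mem_iInf] at hf
    have hf2 : ∀ d ∈ f.support, ∀ e ∈ E, 2 ≤ degS e d := by
      intro d hd e he
      have := hf e
      rw [Submodule.mem_iInf] at this
      exact mem_pow_PS_iff.1 (this he) d hd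
    rw [f.as_sum]
    refine Ideal.sum_mem _ fun d hd => ?_
    obtain ⟨b, b', h1, h2, h3⟩ := split_two_cover hAB hU hEc hm (fun e he => hf2 d hd e he)
    exact (monomial_mem_dualIdeal_sq_iff (MvPolynomial.mem_support_iff.1 hd)).2 ⟨b, b', h1, h2, h3⟩

lemma dualIdeal_eq_inf : dualIdeal K E = E.inf (fun e => PS K e) := by
  rw [Finset.inf_eq_iInf]
  rfl

/-- each PS K e is a minimal prime of the square of the dual ideal -/
lemma PS_mem_minimalPrimes (hm : ∀ e ∈ E, e.card = 2) {e : Finset (Fin n)} (he : e ∈ E) :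
    PS K e ∈ ((dualIdeal K E) ^ 2).minimalPrimes := by
  have hJle : dualIdeal K E ≤ PS K e := fun f hf => mem_dualIdeal_iff.1 hf e he
  have hsq : (dualIdeal K E) ^ 2 ≤ PS K e := by
    refine le_trans ?_ hJle
    exact Ideal.pow_le_self two_ne_zero
  constructor
  · exact ⟨PS_isPrime e, hsq⟩
  · rintro Q ⟨hQp, hQle⟩ hQP
    -- J ≤ Q since J² ≤ Q and Q prime
    have hJQ : dualIdeal K E ≤ Q := by
      intro x hx
      have : x * x ∈ (dualIdeal K E) ^ 2 := by rw [sq]; exact Ideal.mul_mem_mul hx hx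
      rcases hQp.mem_or_mem (hQle this) with h | h <;> exact h
    have hprod : E.prod (fun e => PS K e) ≤ Q := by
      refine le_trans ?_ hJQ
      rw [dualIdeal_eq_inf]
      exact Ideal.prod_le_inf
    obtain ⟨e', he', hPe'⟩ := (hQp.prod_le).1 hprod
    -- PS e' ≤ Q ≤ PS e  implies e' ⊆ e, hence e' = e
    have hsub : e' ⊆ e := by
      intro i hi
      have : (X i : MvPolynomial (Fin n) K) ∈ PS K e :=
        hQP (hPe' (Ideal.subset_span ⟨i, hi, rfl⟩))
      exact X_mem_PS_iff.1 this
    have hee : e' = e := Finset.eq_of_subset_of_card_le hsub (by rw [hm e he, hm e' he'])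
    intro x hx
    exact hPe' (hee ▸ hx)

/-- annihilator of a quotient class -/
lemma mem_ann_mk_iff {I : Ideal (MvPolynomial (Fin n) K)} {f r : MvPolynomial (Fin n) K} :
    r ∈ (⊥ : Submodule (MvPolynomial (Fin n) K) (MvPolynomial (Fin n) K ⧸ I)).colon {(Ideal.Quotient.mk I f : MvPolynomial (Fin n) K ⧸ I)}
      ↔ r * f ∈ I := by
  rw [Submodule.mem_colon_singleton, Submodule.mem_bot]
  have hsmul : r • (Ideal.Quotient.mk I f : MvPolynomial (Fin n) K ⧸ I) =
      Ideal.Quotient.mk I (r * f) := rfl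
  rw [hsmul, Ideal.Quotient.eq_zero_iff_mem]

/-- in the bipartite case every associated prime of R/J² is one of the PS e -/
lemma assoc_prime_eq_PS {A B : Finset (Fin n)} (hAB : Disjoint A B) (hU : A ∪ B = Finset.univ)
    (hEc : ∀ e ∈ E, (e ∩ A).Nonempty ∧ (e ∩ B).Nonempty) (hm : ∀ e ∈ E, e.card = 2)
    (hE : E.Nonempty) {P : Ideal (MvPolynomial (Fin n) K)}
    (hP : IsAssociatedPrime P (MvPolynomial (Fin n) K ⧸ ((dualIdeal K E) ^ 2))) :
    ∃ e ∈ E, P = PS K e := by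
  obtain ⟨hPp, x, hx⟩ := isAssociatedPrime_iff.1 hP
  obtain ⟨f, rfl⟩ := Ideal.Quotient.mk_surjective x
  have hPmem : ∀ r, r ∈ P ↔ r * f ∈ (dualIdeal K E) ^ 2 := by
    intro r
    rw [hx, mem_ann_mk_iff]
  -- P = ⋂ ((PS e)^2 : f), and P prime  ⇒ ∃ e, ((PS e)^2 : f) ≤ P
  have hsq := dualIdeal_sq_eq (K := K) hAB hU hEc hm
  have hprod : (E.prod fun e => Submodule.colon ((PS K e) ^ 2) (Submodule.span (MvPolynomial (Fin n) K) {f})) ≤ P := by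
    refine le_trans Ideal.prod_le_inf ?_
    intro r hr
    rw [Submodule.mem_finsetInf] at hr
    rw [hPmem, hsq, Submodule.mem_iInf]
    intro e
    rw [Submodule.mem_iInf]
    intro he
    have := hr e he
    rw [Submodule.mem_colon_span_singleton, smul_eq_mul] at this
    exact this
  obtain ⟨e, he, hcolon⟩ := (hPp.prod_le).1 hprod
  refine ⟨e, he, ?_⟩
  -- P = colon ((PS e)^2, f)
  have hPle : P ≤ Submodule.colon ((PS K e) ^ 2) (Submodule.span (MvPolynomial (Fin n) K) {f}) := by
    intro r hr
    rw [Submodule.mem_colon_span_singleton, smul_eq_mul]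
    have := (hPmem r).1 hr
    rw [hsq, Submodule.mem_iInf] at this
    have := this e
    rw [Submodule.mem_iInf] at this
    exact this he
  have hPeq : P = Submodule.colon ((PS K e) ^ 2) (Submodule.span (MvPolynomial (Fin n) K) {f}) :=
    le_antisymm hPle hcolon
  have hfnot : f ∉ (PS K e) ^ 2 := by
    intro hf
    have h1 : (1 : MvPolynomial (Fin n) K) ∈ P := by
      rw [hPeq, Submodule.mem_colon_span_singleton, one_smul]
      exact hf
    exact hPp.ne_top ((Ideal.eq_top_iff_one _).2 h1)
  apply le_antisymm
  · intro r hr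
    have hrf : r * f ∈ (PS K e) ^ 2 := by
      rw [hPeq, Submodule.mem_colon_span_singleton, smul_eq_mul] at hr
      exact hr
    exact PS_pow_primary hrf hfnot
  · intro r hr
    have hrr : r * r ∈ (PS K e) ^ 2 := by rw [sq]; exact Ideal.mul_mem_mul hr hr
    have h2 : r * r ∈ P := by
      rw [hPeq, Submodule.mem_colon_span_singleton, smul_eq_mul]
      exact Ideal.mul_mem_right _ _ hrr
    exact (hPp.mem_or_mem h2).elim id id

end Bipartite

section Walks

variable {E : Finset (Finset (Fin n))}

/-- adjacency from the edge set -/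
def Adj (E : Finset (Finset (Fin n))) (i j : Fin n) : Prop :=
  i ≠ j ∧ ({i, j} : Finset (Fin n)) ∈ E

lemma Adj.symm' {i j : Fin n} (h : Adj E i j) : Adj E j i := by
  refine ⟨h.1.symm, ?_⟩
  rw [Finset.pair_comm j i]
  exact h.2

/-- c is a walk of length L -/
def IsWalk (E : Finset (Finset (Fin n))) (c : ℕ → Fin n) (L : ℕ) : Prop :=
  ∀ i < L, Adj E (c i) (c (i + 1))

lemma walk_trans {c1 c2 : ℕ → Fin n} {L1 L2 : ℕ} (h1 : IsWalk E c1 L1) (h2 : IsWalk E c2 L2)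
    (hmid : c1 L1 = c2 0) :
    ∃ c, c 0 = c1 0 ∧ c (L1 + L2) = c2 L2 ∧ IsWalk E c (L1 + L2) := by
  classical
  refine ⟨fun t => if t ≤ L1 then c1 t else c2 (t - L1), by simp, ?_, ?_⟩
  · show (if L1 + L2 ≤ L1 then c1 (L1 + L2) else c2 (L1 + L2 - L1)) = c2 L2
    by_cases h : L1 + L2 ≤ L1
    · have hL2 : L2 = 0 := by omega
      subst hL2
      rw [if_pos h, add_zero, hmid]
    · rw [if_neg h]
      congr 1
      omega
  · intro i hi
    show Adj E (if i ≤ L1 then c1 i else c2 (i - L1))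
      (if i + 1 ≤ L1 then c1 (i + 1) else c2 (i + 1 - L1))
    by_cases h1i : i + 1 ≤ L1
    · rw [if_pos (by omega), if_pos h1i]
      exact h1 i (by omega)
    · by_cases h2i : i ≤ L1
      · have hij : i = L1 := by omega
        subst hij
        rw [if_pos le_rfl, if_neg h1i, hmid]
        have h0 := h2 0 (by omega)
        have heq : i + 1 - i = 1 := by omega
        rwa [heq]
      · rw [if_neg h2i, if_neg h1i]
        have h0 := h2 (i - L1) (by omega)
        have heq : i - L1 + 1 = i + 1 - L1 := by omega
        rwa [heq] at h0

lemma walk_symm {c : ℕ → Fin n} {L : ℕ} (h : IsWalk E c L) :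
    ∃ c', c' 0 = c L ∧ c' L = c 0 ∧ IsWalk E c' L := by
  refine ⟨fun t => c (L - t), by simp, by simp, ?_⟩
  intro i hi
  show Adj E (c (L - i)) (c (L - (i + 1)))
  have heq : L - i = (L - (i + 1)) + 1 := by omega
  rw [heq]
  exact (h (L - (i + 1)) (by omega)).symm'

/-- reachability -/
lemma reach_of_eqvGen {u v : Fin n} (h : Relation.EqvGen (Adj E) u v) :
    ∃ L c, c 0 = u ∧ c L = v ∧ IsWalk E c L := by
  induction h with
  | rel x y hxy =>
      refine ⟨1, fun t => if t = 0 then x else y, by simp, by simp, ?_⟩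
      intro i hi
      have : i = 0 := by omega
      subst this
      simpa using hxy
  | refl x => exact ⟨0, fun _ => x, rfl, rfl, fun i hi => absurd hi (by omega)⟩
  | symm x y _ ih =>
      obtain ⟨L, c, hc0, hcL, hw⟩ := ih
      obtain ⟨c', h0, hL, hw'⟩ := walk_symm hw
      exact ⟨L, c', by rw [h0, hcL], by rw [hL, hc0], hw'⟩
  | trans x y z _ _ ih1 ih2 =>
      obtain ⟨L1, c1, h10, h1L, hw1⟩ := ih1
      obtain ⟨L2, c2, h20, h2L, hw2⟩ := ih2
      obtain ⟨c, h0, hL, hw⟩ := walk_trans hw1 hw2 (by rw [h1L, h20])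
      exact ⟨L1 + L2, c, by rw [h0, h10], by rw [hL, h2L], hw⟩

/-- existence of an odd closed walk when there is no bipartition -/
lemma exists_odd_closed_walk
    (hnb : ¬ ∃ A B : Finset (Fin n), Disjoint A B ∧ A ∪ B = Finset.univ ∧
      ∀ e ∈ E, (e ∩ A).Nonempty ∧ (e ∩ B).Nonempty)
    (hm : ∀ e ∈ E, e.card = 2) :
    ∃ L c, Odd L ∧ c 0 = c L ∧ IsWalk E c L := by
  classical
  by_contra hno
  push_neg at hno
  let st : Setoid (Fin n) := ⟨Relation.EqvGen (Adj E), Relation.EqvGen.is_equivalence _⟩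
  let rep : Fin n → Fin n := fun v => (Quotient.mk st v).out
  have hrep : ∀ v, Relation.EqvGen (Adj E) (rep v) v := by
    intro v
    exact Quotient.exact (Quotient.out_eq (Quotient.mk st v))
  have hrep_adj : ∀ u v, Adj E u v → rep u = rep v := by
    intro u v huv
    show (Quotient.mk st u).out = (Quotient.mk st v).out
    congr 1
    exact Quotient.sound (Relation.EqvGen.rel _ _ huv)
  let col : Fin n → Bool := fun v =>
    decide (∃ L c, Odd L ∧ c 0 = rep v ∧ c L = v ∧ IsWalk E c L)
  have hcoltrue : ∀ v L c, Odd L → c 0 = rep v → c L = v → IsWalk E c L → col v = true :=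
    fun v L c h1 h2 h3 h4 => decide_eq_true ⟨L, c, h1, h2, h3, h4⟩
  have hcolex : ∀ v, col v = true → ∃ L c, Odd L ∧ c 0 = rep v ∧ c L = v ∧ IsWalk E c L :=
    fun v h => of_decide_eq_true h
  have hproper : ∀ u v, Adj E u v → col u ≠ col v := by
    intro u v huv hcol
    have hrepuv : rep u = rep v := hrep_adj u v huv
    have hedgewalk : IsWalk E (fun t => if t = 0 then u else v) 1 := by
      intro i hi
      have : i = 0 := by omega
      subst this
      simpa using huv
    have hcomb : ∀ (L1 L2 : ℕ) (d1 d2 : ℕ → Fin n), d1 0 = rep u → d1 L1 = u → IsWalk E d1 L1 →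
        d2 0 = rep v → d2 L2 = v → IsWalk E d2 L2 → ¬ Odd (L1 + 1 + L2) := by
      intro L1 L2 d1 d2 h10 h1L hw1 h20 h2L hw2 hodd
      obtain ⟨dm, hm0, hmL, hwm⟩ := walk_trans hw1 hedgewalk (by rw [h1L]; simp)
      obtain ⟨d2', h2'0, h2'L, hw2'⟩ := walk_symm hw2
      obtain ⟨df, hf0, hfL, hwf⟩ := walk_trans hwm hw2' (by
        rw [hmL, h2'0, h2L]; simp)
      refine hno (L1 + 1 + L2) df hodd ?_ hwf
      rw [hf0, hm0, h10, hfL, h2'L, h20, hrepuv]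
    obtain ⟨Lu, cu, hu0, huL, hwu⟩ := reach_of_eqvGen (hrep u)
    obtain ⟨Lv, cv, hv0, hvL, hwv⟩ := reach_of_eqvGen (hrep v)
    by_cases hcu : col u = true
    · have hcv : col v = true := hcol ▸ hcu
      obtain ⟨L1, d1, hod1, h10, h1L, hw1⟩ := hcolex u hcu
      obtain ⟨L2, d2, hod2, h20, h2L, hw2⟩ := hcolex v hcv
      refine hcomb L1 L2 d1 d2 h10 h1L hw1 h20 h2L hw2 ?_
      obtain ⟨a, ha⟩ := hod1
      obtain ⟨b, hb⟩ := hod2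
      exact ⟨a + b + 1, by omega⟩
    · have hcv : col v ≠ true := fun h => hcu (hcol.trans h)
      have hLu : ¬ Odd Lu := fun h => hcu (hcoltrue u Lu cu h hu0 huL hwu)
      have hLv : ¬ Odd Lv := fun h => hcv (hcoltrue v Lv cv h hv0 hvL hwv)
      refine hcomb Lu Lv cu cv hu0 huL hwu hv0 hvL hwv ?_
      rcases Nat.even_or_odd Lu with h | h
      · rcases Nat.even_or_odd Lv with h' | h'
        · obtain ⟨a, ha⟩ := h
          obtain ⟨b, hb⟩ := h'
          exact ⟨a + b, by omega⟩
        · exact absurd h' hLv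
      · exact absurd h hLu
  refine hnb ⟨Finset.univ.filter (fun v => col v = true),
    Finset.univ.filter (fun v => col v = false), ?_, ?_, ?_⟩
  · rw [Finset.disjoint_left]
    intro a ha hb
    rw [Finset.mem_filter] at ha hb
    rw [ha.2] at hb
    exact absurd hb.2 (by simp)
  · ext v
    simp only [Finset.mem_union, Finset.mem_filter, Finset.mem_univ, true_and]
    rcases Bool.eq_false_or_eq_true (col v) with h | h <;> simp [h]
  · intro e he
    obtain ⟨i, j, hij, rfl⟩ := Finset.card_eq_two.1 (hm e he)
    have hadj : Adj E i j := ⟨hij, he⟩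
    have hne := hproper i j hadj
    have hone : col i = true ∨ col j = true := by
      cases hci : col i
      · cases hcj : col j
        · exact absurd (hci.trans hcj.symm) hne
        · exact Or.inr rfl
      · exact Or.inl rfl
    have honef : col i = false ∨ col j = false := by
      cases hci : col i
      · exact Or.inl rfl
      · cases hcj : col j
        · exact Or.inr rfl
        · exact absurd (hci.trans hcj.symm) hne
    constructor
    · rcases hone with h | h
      · exact ⟨i, by rw [Finset.mem_inter, Finset.mem_filter]; exact ⟨by simp, by simp, h⟩⟩
      · exact ⟨j, by rw [Finset.mem_inter, Finset.mem_filter]; exact ⟨by simp, by simp, h⟩⟩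
    · rcases honef with h | h
      · exact ⟨i, by rw [Finset.mem_inter, Finset.mem_filter]; exact ⟨by simp, by simp, h⟩⟩
      · exact ⟨j, by rw [Finset.mem_inter, Finset.mem_filter]; exact ⟨by simp, by simp, h⟩⟩

/-- from an odd closed walk, a minimal one is a chordless odd cycle -/
lemma exists_chordless_odd_cycle (hm : ∀ e ∈ E, e.card = 2)
    (hex : ∃ L c, Odd L ∧ c 0 = c L ∧ IsWalk E c L) :
    ∃ L c, Odd L ∧ 3 ≤ L ∧ c 0 = c L ∧ IsWalk E c L ∧
      (∀ i j, i ≤ j → j < L → c i = c j → i = j) ∧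
      (∀ e ∈ E, (∀ x ∈ e, ∃ t, t < L ∧ c t = x) → ∃ t, t < L ∧ e = {c t, c (t + 1)}) := by
  classical
  let Q : ℕ → Prop := fun L => Odd L ∧ ∃ c, c 0 = c L ∧ IsWalk E c L
  have hQ : ∃ L, Q L := by
    obtain ⟨L, c, h1, h2, h3⟩ := hex
    exact ⟨L, h1, c, h2, h3⟩
  set L := Nat.find hQ with hL
  obtain ⟨hodd, c, hc0L, hw⟩ := Nat.find_spec hQ
  rw [← hL] at hodd hc0L hw
  have hmin : ∀ M, M < L → ¬ Q M := fun M hM => Nat.find_min hQ hM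
  have hL1 : L ≠ 1 := by
    intro h
    have := hw 0 (by omega)
    rw [show (0 : ℕ) + 1 = L by omega, ← hc0L] at this
    exact this.1 rfl
  have hL3 : 3 ≤ L := by
    obtain ⟨k, hk⟩ := hodd
    omega
  -- injectivity
  have hinj : ∀ i j, i ≤ j → j < L → c i = c j → i = j := by
    intro i j hij hjL hcij
    by_contra hne
    have hlt : i < j := by omega
    -- inner closed walk of length j - i
    have hQ1 : ∃ c', c' 0 = c' (j - i) ∧ IsWalk E c' (j - i) := by
      refine ⟨fun t => c (i + t), ?_, ?_⟩
      · show c (i + 0) = c (i + (j - i))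
        rw [add_zero, show i + (j - i) = j by omega]
        exact hcij
      · intro t ht
        show Adj E (c (i + t)) (c (i + t + 1))
        exact hw (i + t) (by omega)
    -- outer closed walk of length L - (j - i)
    have hQ2 : ∃ c', c' 0 = c' (L - (j - i)) ∧ IsWalk E c' (L - (j - i)) := by
      refine ⟨fun t => if j + t ≤ L then c (j + t) else c (j + t - L), ?_, ?_⟩
      · show (if j + 0 ≤ L then c (j + 0) else c (j + 0 - L)) =
          (if j + (L - (j - i)) ≤ L then c (j + (L - (j - i)))
            else c (j + (L - (j - i)) - L))
        rw [if_pos (by omega), add_zero]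
        by_cases hi : i = 0
        · rw [if_pos (by omega), show j + (L - (j - i)) = L by omega, ← hc0L]
          exact (hi ▸ hcij : c 0 = c j).symm
        · rw [if_neg (by omega), show j + (L - (j - i)) - L = i by omega]
          exact hcij.symm
      · intro t ht
        show Adj E (if j + t ≤ L then c (j + t) else c (j + t - L))
          (if j + t + 1 ≤ L then c (j + t + 1) else c (j + t + 1 - L))
        by_cases h1 : j + t + 1 ≤ L
        · rw [if_pos (by omega), if_pos h1]
          exact hw (j + t) (by omega)
        · by_cases h2 : j + t ≤ L
          · have hjt : j + t = L := by omega
            rw [if_pos h2, if_neg h1, hjt, ← hc0L, show L + 1 - L = 1 by omega]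
            exact hw 0 (by omega)
          · rw [if_neg h2, if_neg h1]
            have := hw (j + t - L) (by omega)
            rwa [show j + t - L + 1 = j + t + 1 - L by omega] at this
    rcases Nat.even_or_odd (j - i) with hev | hod
    · have hodd2 : Odd (L - (j - i)) := by
        obtain ⟨a, ha⟩ := hev
        obtain ⟨b, hb⟩ := hodd
        exact ⟨b - a, by omega⟩
      exact hmin (L - (j - i)) (by omega) ⟨hodd2, hQ2⟩
    · exact hmin (j - i) (by omega) ⟨hod, hQ1⟩
  refine ⟨L, c, hodd, hL3, hc0L, hw, hinj, ?_⟩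
  -- chordlessness
  intro e he hsub
  obtain ⟨x, y, hxy, hexy⟩ := Finset.card_eq_two.1 (hm e he)
  obtain ⟨i, hiL, hic⟩ := hsub x (hexy ▸ by simp)
  obtain ⟨j, hjL, hjc⟩ := hsub y (hexy ▸ by simp)
  -- wlog i < j
  have main : ∀ i j, i < j → j < L → c i ≠ c j → ({c i, c j} : Finset (Fin n)) ∈ E →
      ∃ t, t < L ∧ ({c i, c j} : Finset (Fin n)) = {c t, c (t + 1)} := by
    clear hic hjc hiL hjL hxy i j
    intro i j hij hjL hcne hmem
    by_cases hj1 : j = i + 1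
    · exact ⟨i, by omega, by rw [hj1]⟩
    by_cases hedge : i = 0 ∧ j = L - 1
    · refine ⟨L - 1, by omega, ?_⟩
      rw [show L - 1 + 1 = L by omega, ← hc0L, hedge.1, hedge.2, Finset.pair_comm]
    -- chord: two shorter closed walks
    exfalso
    have hQ1 : ∃ c', c' 0 = c' (j - i + 1) ∧ IsWalk E c' (j - i + 1) := by
      refine ⟨fun t => if t ≤ j - i then c (i + t) else c i, ?_, ?_⟩
      · show (if 0 ≤ j - i then c (i + 0) else c i) =
          (if j - i + 1 ≤ j - i then c (i + (j - i + 1)) else c i)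
        rw [if_pos (by omega), if_neg (by omega), add_zero]
      · intro t ht
        show Adj E (if t ≤ j - i then c (i + t) else c i)
          (if t + 1 ≤ j - i then c (i + t + 1) else c i)
        by_cases h1 : t + 1 ≤ j - i
        · rw [if_pos (by omega), if_pos h1]
          exact hw (i + t) (by omega)
        · have hti : t = j - i := by omega
          rw [if_pos (by omega), if_neg h1, hti, show i + (j - i) = j by omega]
          exact ⟨hcne.symm, by rwa [Finset.pair_comm]⟩
    have hQ2 : ∃ c', c' 0 = c' (L - (j - i) + 1) ∧ IsWalk E c' (L - (j - i) + 1) := by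
      refine ⟨fun t => if t ≤ L - j + i then (if j + t ≤ L then c (j + t) else c (j + t - L))
        else c j, ?_, ?_⟩
      · show (if 0 ≤ L - j + i then (if j + 0 ≤ L then c (j + 0) else c (j + 0 - L)) else c j) =
          (if L - (j - i) + 1 ≤ L - j + i then (if j + (L - (j - i) + 1) ≤ L
            then c (j + (L - (j - i) + 1)) else c (j + (L - (j - i) + 1) - L)) else c j)
        rw [if_pos (by omega), if_pos (by omega), add_zero, if_neg (by omega)]
      · intro t ht
        show Adj E (if t ≤ L - j + i then (if j + t ≤ L then c (j + t) else c (j + t - L))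
            else c j)
          (if t + 1 ≤ L - j + i then (if j + t + 1 ≤ L then c (j + t + 1) else c (j + t + 1 - L))
            else c j)
        by_cases hlast : t = L - j + i
        · rw [if_pos (show t ≤ L - j + i by omega),
            if_neg (show ¬(t + 1 ≤ L - j + i) by omega)]
          have hval : (if j + t ≤ L then c (j + t) else c (j + t - L)) = c i := by
            by_cases hi0 : i = 0
            · rw [if_pos (show j + t ≤ L by omega), show j + t = L by omega, ← hc0L, hi0]
            · rw [if_neg (show ¬(j + t ≤ L) by omega), show j + t - L = i by omega]
          rw [hval]
          exact ⟨hcne, hmem⟩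
        · have ht' : t < L - j + i := by omega
          rw [if_pos (show t ≤ L - j + i by omega), if_pos (show t + 1 ≤ L - j + i by omega)]
          by_cases h1 : j + t + 1 ≤ L
          · rw [if_pos (show j + t ≤ L by omega), if_pos h1]
            exact hw (j + t) (by omega)
          · by_cases h2 : j + t ≤ L
            · have hjt : j + t = L := by omega
              rw [if_pos h2, if_neg h1, hjt, ← hc0L, show L + 1 - L = 1 by omega]
              exact hw 0 (by omega)
            · rw [if_neg h2, if_neg h1]
              have := hw (j + t - L) (by omega)
              rwa [show j + t - L + 1 = j + t + 1 - L by omega] at this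
    have hboth : j - i + 1 < L ∧ L - (j - i) + 1 < L := by
      constructor
      · rcases Nat.lt_or_ge (j - i) (L - 1) with h | h
        · omega
        · exfalso
          exact hedge ⟨by omega, by omega⟩
      · omega
    rcases Nat.even_or_odd (j - i + 1) with hev | hod
    · have hodd2 : Odd (L - (j - i) + 1) := by
        obtain ⟨a, ha⟩ := hev
        obtain ⟨b, hb⟩ := hodd
        refine ⟨b - a + 1, by omega⟩
      exact hmin _ hboth.2 ⟨hodd2, hQ2⟩
    · exact hmin _ hboth.1 ⟨hod, hQ1⟩
  have hij : i ≠ j := by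
    intro h
    rw [h, hjc] at hic
    exact hxy hic.symm
  rcases Nat.lt_or_ge i j with h | h
  · obtain ⟨t, ht, heq⟩ := main i j h hjL (by rw [hic, hjc]; exact hxy) (by
      rw [hic, hjc, ← hexy]; exact he)
    exact ⟨t, ht, by rw [hexy, ← hic, ← hjc]; exact heq⟩
  · have h' : j < i := by omega
    obtain ⟨t, ht, heq⟩ := main j i h' hiL (by rw [hic, hjc]; exact fun hh => hxy hh.symm) (by
      rw [hic, hjc, Finset.pair_comm y x, ← hexy]; exact he)
    exact ⟨t, ht, by rw [hexy, ← hic, ← hjc, Finset.pair_comm (c i) (c j)]; exact heq⟩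

end Walks

section Cycle

variable {E : Finset (Finset (Fin n))} {L : ℕ} {c : ℕ → Fin n}

/-- parity obstruction around an odd cycle -/
lemma cycle_parity (hodd : Odd L) (hL3 : 3 ≤ L) (hc0L : c 0 = c L) (hw : IsWalk E c L)
    (u v : Fin n →₀ ℕ) (hu : ∀ e ∈ E, 1 ≤ degS e u) (hv : ∀ e ∈ E, 1 ≤ degS e v)
    (hsumv : ∀ t, t < L → u (c t) + v (c t) = 1) : False := by
  have hsv : ∀ t, t ≤ L → u (c t) + v (c t) = 1 := by
    intro t ht
    rcases eq_or_lt_of_le ht with rfl | hlt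
    · rw [← hc0L]
      exact hsumv 0 (by omega)
    · exact hsumv t hlt
  have hedge : ∀ t, t < L → u (c t) + u (c (t + 1)) = 1 := by
    intro t ht
    have hadj := hw t ht
    have hmem := hadj.2
    have hne := hadj.1
    have h1 : 1 ≤ u (c t) + u (c (t + 1)) := by
      have := hu _ hmem
      rwa [degS, Finset.sum_pair hne] at this
    have h2 : 1 ≤ v (c t) + v (c (t + 1)) := by
      have := hv _ hmem
      rwa [degS, Finset.sum_pair hne] at this
    have h3 := hsv t (by omega)
    have h4 := hsv (t + 1) (by omega)
    omega
  have hstep : ∀ t, t ≤ L →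
      (Even t → u (c t) = u (c 0)) ∧ (¬ Even t → u (c t) + u (c 0) = 1) := by
    intro t
    induction t with
    | zero => intro _; exact ⟨fun _ => rfl, fun h => absurd (Even.zero) h⟩
    | succ t ih =>
        intro ht
        have iht := ih (by omega)
        have he := hedge t (by omega)
        have hpar := Nat.even_add_one (n := t)
        constructor
        · intro hev
          have hodd_t : ¬ Even t := by rw [Nat.even_add_one] at hev; exact fun h => hev h
          have := iht.2 hodd_t
          omega
        · intro hoddt
          have hev_t : Even t := by
            by_contra h
            exact hoddt (Nat.even_add_one.2 h)
          have := iht.1 hev_t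
          omega
  have hLodd : ¬ Even L := Nat.not_even_iff_odd.2 hodd
  have := (hstep L le_rfl).2 hLodd
  rw [← hc0L] at this
  omega

/-- the vertex set of the cycle -/
def cycC (L : ℕ) (c : ℕ → Fin n) : Finset (Fin n) := (Finset.range L).image c

/-- the cover construction: for any cycle vertex c s, a + e_{c s} is a sum of two covers -/
lemma cycle_cover (hodd : Odd L) (hL3 : 3 ≤ L) (hc0L : c 0 = c L) (hw : IsWalk E c L)
    (hinj : ∀ i j, i ≤ j → j < L → c i = c j → i = j)
    (hchord : ∀ e ∈ E, (∀ x ∈ e, ∃ t, t < L ∧ c t = x) → ∃ t, t < L ∧ e = {c t, c (t + 1)})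
    {s : ℕ} (hs : s < L) :
    ∃ u v : Fin n →₀ ℕ, (∀ e ∈ E, 1 ≤ degS e u) ∧ (∀ e ∈ E, 1 ≤ degS e v) ∧
      u + v = Finsupp.equivFunOnFinite.symm (fun x => if x ∈ cycC L c then 1 else 2)
        + Finsupp.single (c s) 1 := by
  classical
  -- reindexed cycle starting at s, with opaque functions
  obtain ⟨idx, hidxv⟩ : ∃ f : ℕ → ℕ, ∀ r, f r = if s + r < L then s + r else s + r - L :=
    ⟨_, fun _ => rfl⟩
  obtain ⟨w, hwv⟩ : ∃ g : ℕ → Fin n, ∀ r, g r = c (idx r) := ⟨_, fun _ => rfl⟩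
  have hidx_lt : ∀ r, r < L → idx r < L := by
    intro r hr
    rw [hidxv]
    split <;> omega
  have hidx_inj : ∀ r1 r2, r1 < L → r2 < L → idx r1 = idx r2 → r1 = r2 := by
    intro r1 r2 h1 h2 h
    rw [hidxv, hidxv] at h
    split at h <;> split at h <;> omega
  have hw_inj : ∀ r1 r2, r1 < L → r2 < L → w r1 = w r2 → r1 = r2 := by
    intro r1 r2 h1 h2 h
    rw [hwv, hwv] at h
    rcases Nat.le_or_le (idx r1) (idx r2) with hle | hle
    · exact hidx_inj r1 r2 h1 h2 (hinj _ _ hle (hidx_lt r2 h2) h)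
    · exact hidx_inj r1 r2 h1 h2 (hinj _ _ hle (hidx_lt r1 h1) h.symm).symm
  have hexoff : ∀ t, t < L → ∃ r, r < L ∧ idx r = t := by
    intro t ht
    refine ⟨if s ≤ t then t - s else t + L - s, ?_, ?_⟩
    · split <;> omega
    · rw [hidxv]
      split <;> split <;> omega
  have hidx0 : idx 0 = s := by rw [hidxv]; split <;> omega
  -- u and v
  let u : Fin n → ℕ := fun x => if h : ∃ r, r < L ∧ w r = x then
    (if Even (Nat.find h) then 1 else 0) else 1
  let v : Fin n → ℕ := fun x => if h : ∃ r, r < L ∧ w r = x then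
    (if Nat.find h = 0 ∨ ¬ Even (Nat.find h) then 1 else 0) else 1
  have hufind : ∀ r, r < L → u (w r) = if Even r then 1 else 0 := by
    intro r hr
    have hex : ∃ r', r' < L ∧ w r' = w r := ⟨r, hr, rfl⟩
    have hfind := Nat.find_spec hex
    have heq : Nat.find hex = r := hw_inj _ _ hfind.1 hr hfind.2
    simp only [u, dif_pos hex, heq]
  have hvfind : ∀ r, r < L → v (w r) = if r = 0 ∨ ¬ Even r then 1 else 0 := by
    intro r hr
    have hex : ∃ r', r' < L ∧ w r' = w r := ⟨r, hr, rfl⟩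
    have hfind := Nat.find_spec hex
    have heq : Nat.find hex = r := hw_inj _ _ hfind.1 hr hfind.2
    simp only [v, dif_pos hex, heq]
  have hnotC : ∀ x, x ∉ cycC L c → (u x = 1 ∧ v x = 1) := by
    intro x hx
    have hnex : ¬ ∃ r, r < L ∧ w r = x := by
      rintro ⟨r, hr, rfl⟩
      refine hx (Finset.mem_image.2 ⟨idx r, Finset.mem_range.2 (hidx_lt r hr), ?_⟩)
      rw [hwv]
    constructor
    · simp only [u, dif_neg hnex]
    · simp only [v, dif_neg hnex]
  have hCmem : ∀ x ∈ cycC L c, ∃ r, r < L ∧ w r = x := by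
    intro x hx
    obtain ⟨t, ht, rfl⟩ := Finset.mem_image.1 hx
    rw [Finset.mem_range] at ht
    obtain ⟨r, hr, hidx⟩ := hexoff t ht
    exact ⟨r, hr, by rw [hwv, hidx]⟩
  -- edge structure
  have hedgeform : ∀ e ∈ E, (∃ x ∈ e, x ∉ cycC L c) ∨
      (∃ ρ, ρ + 1 < L ∧ e = {w ρ, w (ρ + 1)}) ∨ e = {w (L - 1), w 0} := by
    intro e he
    by_cases hall : ∀ x ∈ e, x ∈ cycC L c
    · right
      obtain ⟨t, ht, het⟩ := hchord e he (by
        intro x hx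
        obtain ⟨t', ht', rfl⟩ := Finset.mem_image.1 (hall x hx)
        exact ⟨t', Finset.mem_range.1 ht', rfl⟩)
      obtain ⟨ρ, hρ, hidxρ⟩ := hexoff t ht
      have hct : c t = w ρ := by rw [hwv, hidxρ]
      by_cases hρ1 : ρ + 1 < L
      · left
        refine ⟨ρ, hρ1, ?_⟩
        have hct1 : c (t + 1) = w (ρ + 1) := by
          rw [hwv]
          by_cases hidxlt : t < L - 1
          · have h2 : idx (ρ + 1) = t + 1 := by
              rw [hidxv] at hidxρ ⊢
              split at hidxρ <;> split <;> omega
            rw [h2]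
          · -- t = L - 1 ⇒ idx (ρ+1) = 0
            have ht1 : t = L - 1 := by omega
            have h2 : idx (ρ + 1) = 0 := by
              rw [hidxv] at hidxρ ⊢
              split at hidxρ <;> split <;> omega
            rw [h2, show t + 1 = L by omega, ← hc0L]
        rw [het, hct, hct1]
      · right
        have hρL : ρ = L - 1 := by omega
        have hct1 : c (t + 1) = w 0 := by
          rw [hwv, hidx0]
          rw [hidxv] at hidxρ
          split at hidxρ
          · have hs0 : s = 0 := by omega
            rw [show t + 1 = L by omega, ← hc0L, hs0]
          · rw [show t + 1 = s by omega]
        rw [het, hct, hρL, hct1]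
    · left
      push_neg at hall
      exact hall
  -- assemble the two covers
  have hL1even : Even (L - 1) := Nat.Odd.sub_odd hodd odd_one
  have hwne : ∀ r1 r2, r1 < L → r2 < L → r1 ≠ r2 → w r1 ≠ w r2 :=
    fun r1 r2 h1 h2 hne h => hne (hw_inj r1 r2 h1 h2 h)
  refine ⟨Finsupp.equivFunOnFinite.symm u, Finsupp.equivFunOnFinite.symm v, ?_, ?_, ?_⟩
  · intro e he
    rcases hedgeform e he with ⟨x, hxe, hxC⟩ | ⟨ρ, hρ1, rfl⟩ | rfl
    · have h1 : u x = 1 := (hnotC x hxC).1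
      calc 1 = u x := h1.symm
        _ ≤ ∑ i ∈ e, u i := Finset.single_le_sum (fun i _ => Nat.zero_le _) hxe
        _ = degS e (Finsupp.equivFunOnFinite.symm u) := by rw [degS]; rfl
    · rw [degS, Finset.sum_pair (hwne ρ (ρ + 1) (by omega) hρ1 (by omega))]
      have h1 : (Finsupp.equivFunOnFinite.symm u) (w ρ) = u (w ρ) := rfl
      have h2 : (Finsupp.equivFunOnFinite.symm u) (w (ρ + 1)) = u (w (ρ + 1)) := rfl
      rw [h1, h2, hufind ρ (by omega), hufind (ρ + 1) hρ1]
      by_cases hev : Even ρ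
      · rw [if_pos hev]; omega
      · rw [if_pos (Nat.even_add_one.2 hev)]; omega
    · rw [degS, Finset.sum_pair (hwne (L - 1) 0 (by omega) (by omega) (by omega))]
      have h1 : (Finsupp.equivFunOnFinite.symm u) (w (L - 1)) = u (w (L - 1)) := rfl
      rw [h1, hufind (L - 1) (by omega), if_pos hL1even]
      omega
  · intro e he
    rcases hedgeform e he with ⟨x, hxe, hxC⟩ | ⟨ρ, hρ1, rfl⟩ | rfl
    · have h1 : v x = 1 := (hnotC x hxC).2
      calc 1 = v x := h1.symm
        _ ≤ ∑ i ∈ e, v i := Finset.single_le_sum (fun i _ => Nat.zero_le _) hxe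
        _ = degS e (Finsupp.equivFunOnFinite.symm v) := by rw [degS]; rfl
    · rw [degS, Finset.sum_pair (hwne ρ (ρ + 1) (by omega) hρ1 (by omega))]
      have h1 : (Finsupp.equivFunOnFinite.symm v) (w ρ) = v (w ρ) := rfl
      have h2 : (Finsupp.equivFunOnFinite.symm v) (w (ρ + 1)) = v (w (ρ + 1)) := rfl
      rw [h1, h2, hvfind ρ (by omega), hvfind (ρ + 1) hρ1]
      by_cases hev : Even ρ
      · rw [if_pos (Or.inr (fun h => (Nat.even_add_one.1 h) hev))]; omega
      · rw [if_pos (Or.inr hev)]; omega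
    · rw [degS, Finset.sum_pair (hwne (L - 1) 0 (by omega) (by omega) (by omega))]
      have h1 : (Finsupp.equivFunOnFinite.symm v) (w 0) = v (w 0) := rfl
      rw [h1, hvfind 0 (by omega), if_pos (Or.inl rfl)]
      omega
  · ext x
    rw [Finsupp.add_apply, Finsupp.add_apply]
    have hux : (Finsupp.equivFunOnFinite.symm u) x = u x := rfl
    have hvx : (Finsupp.equivFunOnFinite.symm v) x = v x := rfl
    have hax : (Finsupp.equivFunOnFinite.symm
        (fun x => if x ∈ cycC L c then 1 else 2) : Fin n →₀ ℕ) x =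
        (if x ∈ cycC L c then 1 else 2) := rfl
    rw [hux, hvx, hax, Finsupp.single_apply]
    have hcs : c s = w 0 := by rw [hwv, hidx0]
    by_cases hxC : x ∈ cycC L c
    · obtain ⟨r, hr, rfl⟩ := hCmem x hxC
      rw [if_pos hxC, hufind r hr, hvfind r hr]
      by_cases hr0 : r = 0
      · subst hr0
        rw [if_pos (Even.zero), if_pos (Or.inl rfl), if_pos (by rw [hcs])]
      · rw [if_neg (show ¬ c s = w r by
          rw [hcs]
          exact hwne 0 r (by omega) hr (fun h => hr0 h.symm))]
        by_cases hev : Even r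
        · rw [if_pos hev, if_neg (show ¬ (r = 0 ∨ ¬ Even r) by push_neg; exact ⟨hr0, hev⟩)]
        · rw [if_neg hev, if_pos (Or.inr hev)]
          omega
    · have h1 := hnotC x hxC
      have hcsC : c s ∈ cycC L c := Finset.mem_image.2 ⟨s, Finset.mem_range.2 hs, rfl⟩
      rw [h1.1, h1.2, if_neg hxC, if_neg (show ¬ c s = x from fun h => hxC (h ▸ hcsC))]
      omega

end Cycle

/-- main lemma for the forward direction: a non-bipartite graph has a non-minimal
associated prime for the square of the dual ideal -/
lemma nonbip_bad_prime {E : Finset (Finset (Fin n))} (hm : ∀ e ∈ E, e.card = 2)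
    (hnb : ¬ ∃ A B : Finset (Fin n), Disjoint A B ∧ A ∪ B = Finset.univ ∧
      ∀ e ∈ E, (e ∩ A).Nonempty ∧ (e ∩ B).Nonempty) :
    ∃ P : Ideal (MvPolynomial (Fin n) K),
      IsAssociatedPrime P (MvPolynomial (Fin n) K ⧸ ((dualIdeal K E) ^ 2)) ∧
      P ∉ ((dualIdeal K E) ^ 2).minimalPrimes := by
  classical
  obtain ⟨L, c, hodd, hL3, hc0L, hwalk, hinj, hchord⟩ :=
    exists_chordless_odd_cycle hm (exists_odd_closed_walk hnb hm)
  set C := cycC L c with hC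
  set a : Fin n →₀ ℕ :=
    Finsupp.equivFunOnFinite.symm (fun x => if x ∈ C then 1 else 2) with ha
  have hax : ∀ x, a x = if x ∈ C then 1 else 2 := fun _ => rfl
  have hctC : ∀ t, t < L → c t ∈ C :=
    fun t ht => Finset.mem_image.2 ⟨t, Finset.mem_range.2 ht, rfl⟩
  set m : MvPolynomial (Fin n) K := monomial a 1 with hmdef
  -- forward: X i * m ∈ J² for i ∈ C
  have hfor : ∀ i ∈ C, X i * m ∈ (dualIdeal K E) ^ 2 := by
    intro i hi
    obtain ⟨t, ht, rfl⟩ := Finset.mem_image.1 hi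
    rw [Finset.mem_range] at ht
    obtain ⟨u, v, hu, hv, hsum⟩ := cycle_cover hodd hL3 hc0L hwalk hinj hchord ht
    have heq : X (c t) * m = monomial (Finsupp.single (c t) 1 + a) 1 := by
      rw [hmdef, X, monomial_mul, one_mul]
    rw [heq]
    refine (monomial_mem_dualIdeal_sq_iff one_ne_zero).2 ⟨u, v, hu, hv, ?_⟩
    rw [hsum, ← ha, add_comm]
  -- reverse: r * m ∈ J² → r ∈ PS K C
  have hrev : ∀ r : MvPolynomial (Fin n) K,
      r * m ∈ (dualIdeal K E) ^ 2 → r ∈ PS K C := by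
    intro r hr
    rw [mem_PS_iff]
    intro d hd
    by_contra hno
    have hdeg0 : degS C d = 0 := by omega
    have hd0 : ∀ x ∈ C, d x = 0 := by
      intro x hx
      have := Finset.sum_eq_zero_iff.1 hdeg0
      exact this x hx
    have hcoeff : coeff (d + a) (r * m) = coeff d r := by
      rw [hmdef, MvPolynomial.coeff_mul_monomial', if_pos le_add_self,
        add_tsub_cancel_right, mul_one]
    have hmem : monomial (d + a) (coeff d r) ∈ (dualIdeal K E) ^ 2 := by
      rw [← hcoeff]
      exact monClosed_dualIdeal_sq _ hr _
    obtain ⟨u, v, hu, hv, hsplit⟩ := (monomial_mem_dualIdeal_sq_iff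
      (MvPolynomial.mem_support_iff.1 hd)).1 hmem
    refine cycle_parity hodd hL3 hc0L hwalk u v hu hv ?_
    intro t ht
    have happ : (d + a) (c t) = (u + v) (c t) := by rw [← hsplit]
    rw [Finsupp.add_apply, Finsupp.add_apply] at happ
    have h1 : d (c t) = 0 := hd0 _ (hctC t ht)
    have h2 : a (c t) = 1 := by rw [hax, if_pos (hctC t ht)]
    omega
  refine ⟨PS K C, isAssociatedPrime_iff.2 ⟨PS_isPrime C, Ideal.Quotient.mk _ m, ?_⟩, ?_⟩
  · -- PS K C = annihilator
    ext r
    rw [mem_ann_mk_iff]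
    constructor
    · intro hr
      have hle : PS K C ≤ ((dualIdeal K E) ^ 2).colon
          (Submodule.span (MvPolynomial (Fin n) K) {m}) := by
        rw [PS, Ideal.span_le]
        rintro _ ⟨i, hi, rfl⟩
        rw [SetLike.mem_coe, Submodule.mem_colon_span_singleton, smul_eq_mul]
        exact hfor i hi
      have := hle hr
      rwa [Submodule.mem_colon_span_singleton, smul_eq_mul] at this
    · exact hrev r
  · -- not minimal
    intro hmin
    have he0 : ({c 0, c 1} : Finset (Fin n)) ∈ E := (hwalk 0 (by omega)).2
    have hQle : PS K ({c 0, c 1} : Finset (Fin n)) ≤ PS K C := by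
      rw [PS, Ideal.span_le]
      rintro _ ⟨i, hi, rfl⟩
      refine Ideal.subset_span ⟨i, ?_, rfl⟩
      rcases Finset.mem_insert.1 hi with rfl | hi
      · exact hctC 0 (by omega)
      · rw [Finset.mem_singleton] at hi
        subst hi
        exact hctC 1 (by omega)
    have hJQ : (dualIdeal K E) ^ 2 ≤ PS K ({c 0, c 1} : Finset (Fin n)) := by
      refine le_trans (Ideal.pow_le_self two_ne_zero) ?_
      exact fun f hf => mem_dualIdeal_iff.1 hf _ he0
    have hPQ : PS K C ≤ PS K ({c 0, c 1} : Finset (Fin n)) :=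
      hmin.2 ⟨PS_isPrime _, hJQ⟩ hQle
    have hc2 : (X (c 2) : MvPolynomial (Fin n) K) ∈ PS K C :=
      Ideal.subset_span ⟨c 2, hctC 2 (by omega), rfl⟩
    have hc2' := X_mem_PS_iff.1 (hPQ hc2)
    rcases Finset.mem_insert.1 hc2' with h | h
    · have := hinj 0 2 (by omega) (by omega) h.symm
      omega
    · rw [Finset.mem_singleton] at h
      have := hinj 1 2 (by omega) (by omega) h.symm
      omega

end Stmt8Aux


theorem stmt8 {K : Type*} [Field K] {n : ℕ} (E : Finset (Finset (Fin n)))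
    (hE : E.Nonempty) (hm : ∀ e ∈ E, e.card = 2) :
    (∀ P : Ideal (MvPolynomial (Fin n) K),
        IsAssociatedPrime P (MvPolynomial (Fin n) K ⧸ ((dualIdeal K E) ^ 2)) →
          P ∈ ((dualIdeal K E) ^ 2).minimalPrimes) ↔
      (∃ A B : Finset (Fin n), Disjoint A B ∧ A ∪ B = Finset.univ ∧
        ∀ e ∈ E, (e ∩ A).Nonempty ∧ (e ∩ B).Nonempty) := by
  constructor
  · intro h
    by_contra hnb
    obtain ⟨P, hass, hnm⟩ := Stmt8Aux.nonbip_bad_prime (K := K) hm hnb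
    exact hnm (h P hass)
  · rintro ⟨A, B, hAB, hU, hEc⟩ P hP
    obtain ⟨e, he, rfl⟩ := Stmt8Aux.assoc_prime_eq_PS hAB hU hEc hm hE hP
    exact Stmt8Aux.PS_mem_minimalPrimes hm he
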